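/- Let p be a prime and let Ω = {0,1}^n. Define f ∈ F_p^Ω by f(x) = ∑_{i=1}^{n} x_i − k, and for A ⊆ [n] define x_A ∈ F_p^Ω by x_A(x) = ∏_{j∈A} x_j. Assume 0 ≤ s, k ≤ p−1 and s + k ≤ n. Then the set of functions {x_A · f : A ⊆ [n], |A| ≤ s−1} is linearly independent in the vector space F_p^Ω over F_p. -/

import Mathlib

open Finset

private lemma swallow_prod_ite_subset {p n : ℕ} (A T : Finset (Fin n)) :
    (∏ j ∈ A, (if j ∈ T then (1 : ZMod p) else 0)) = if A ⊆ T then 1 else 0 := by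
  by_cases h : A ⊆ T
  · rw [if_pos h]
    exact Finset.prod_eq_one fun j hj => if_pos (h hj)
  · rw [if_neg h]
    obtain ⟨j, hjA, hjT⟩ := Finset.not_subset.mp h
    exact Finset.prod_eq_zero hjA (if_neg hjT)

private lemma swallow_alt_sum_zero {p n : ℕ} (S V : Finset (Fin n)) (hV : V ⊆ S)
    (hne : V ≠ S) :
    ∑ U ∈ S.powerset.filter (fun U => V ⊆ U), (-1 : ZMod p) ^ U.card = 0 := by
  have key : ∑ U ∈ S.powerset.filter (fun U => V ⊆ U), (-1 : ZMod p) ^ U.card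
      = ∑ W ∈ (S \ V).powerset, (-1 : ZMod p) ^ (W ∪ V).card := by
    apply Finset.sum_bij' (fun U _ => U \ V) (fun W _ => W ∪ V)
    · intro U hU
      rw [Finset.mem_powerset]
      exact Finset.sdiff_subset_sdiff (Finset.mem_powerset.mp (Finset.mem_filter.mp hU).1)
        (subset_refl _)
    · intro W hW
      rw [Finset.mem_filter, Finset.mem_powerset]
      constructor
      · exact Finset.union_subset
          ((Finset.mem_powerset.mp hW).trans (Finset.sdiff_subset)) hV
      · exact Finset.subset_union_right
    · intro U hU
      exact Finset.sdiff_union_of_subset (Finset.mem_filter.mp hU).2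
    · intro W hW
      have hd : Disjoint W V := by
        have := Finset.mem_powerset.mp hW
        exact Finset.disjoint_left.mpr fun a ha hav =>
          (Finset.mem_sdiff.mp (this ha)).2 hav
      exact Finset.union_sdiff_cancel_right hd
    · intro U hU
      rw [Finset.sdiff_union_of_subset (Finset.mem_filter.mp hU).2]
  rw [key]
  have hd : ∀ W ∈ (S \ V).powerset, ((W ∪ V).card) = W.card + V.card := by
    intro W hW
    apply Finset.card_union_of_disjoint
    exact Finset.disjoint_left.mpr fun a ha hav =>
      (Finset.mem_sdiff.mp (Finset.mem_powerset.mp hW ha)).2 hav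
  calc ∑ W ∈ (S \ V).powerset, (-1 : ZMod p) ^ (W ∪ V).card
      = ∑ W ∈ (S \ V).powerset, (-1 : ZMod p) ^ W.card * (-1) ^ V.card := by
        apply Finset.sum_congr rfl
        intro W hW
        rw [hd W hW, pow_add]
    _ = (∑ W ∈ (S \ V).powerset, (-1 : ZMod p) ^ W.card) * (-1) ^ V.card := by
        rw [Finset.sum_mul]
    _ = 0 := by
        have hne' : S \ V ≠ ∅ := by
          intro h
          apply hne (le_antisymm hV ?_)
          intro a ha
          by_contra hav
          have : a ∈ S \ V := Finset.mem_sdiff.mpr ⟨ha, hav⟩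
          rw [h] at this
          exact absurd this (Finset.notMem_empty a)
        have hZ : (∑ W ∈ (S \ V).powerset, (-1 : ℤ) ^ W.card) = 0 := by
          rw [Finset.sum_powerset_neg_one_pow_card, if_neg hne']
        have : (∑ W ∈ (S \ V).powerset, (-1 : ZMod p) ^ W.card) = 0 := by
          have := congrArg (fun z : ℤ => (z : ZMod p)) hZ
          push_cast at this
          exact this
        rw [this, zero_mul]

/-- **Swallowing lemma** (Lemma 5.38 in Babai–Frankl). Let `p` be a prime and
`Ω = {0,1}^n` (modeled as `Fin n → Bool`). Define `f ∈ F_p^Ω` by `f x = ∑_{i=1}^n x_i − k`,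
and for `A ⊆ [n]` define `x_A ∈ F_p^Ω` by `x_A x = ∏_{j ∈ A} x_j`. Assume
`0 ≤ s, k ≤ p − 1` and `s + k ≤ n`. Then the functions `x_A · f` for `|A| ≤ s − 1`
(equivalently `|A| < s`) are linearly independent in the `F_p`-vector space `F_p^Ω`. -/
theorem swallowing_lemma_linearIndependent
    (p : ℕ) (hp : p.Prime) (n s k : ℕ)
    (hs : s ≤ p - 1) (hk : k ≤ p - 1) (hsk : s + k ≤ n) :
    LinearIndependent (ZMod p)
      (fun A : {A : Finset (Fin n) // A.card < s} =>
        fun x : Fin n → Bool =>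
          (∏ j ∈ A.1, (if x j then (1 : ZMod p) else 0)) *
            ((∑ i : Fin n, if x i then (1 : ZMod p) else 0) - (k : ZMod p))) := by
  classical
  haveI : Fact p.Prime := ⟨hp⟩
  have hp1 : p - 1 < p := Nat.sub_lt hp.pos one_pos
  have hsp : s < p := lt_of_le_of_lt hs hp1
  have hkp : k < p := lt_of_le_of_lt hk hp1
  rw [Fintype.linearIndependent_iff]
  intro g hg
  by_contra hcon
  push_neg at hcon
  obtain ⟨i₀, hi₀⟩ := hcon
  -- Key evaluation identity: for every T, (|T| - k) * Λ(T) = 0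
  have hgx : ∀ T : Finset (Fin n),
      ((T.card : ZMod p) - (k : ZMod p)) *
        (∑ j : {A : Finset (Fin n) // A.card < s}, if j.1 ⊆ T then g j else 0) = 0 := by
    intro T
    have h1 := congrFun hg (fun i => decide (i ∈ T))
    simp only [Finset.sum_apply, Pi.smul_apply, Pi.zero_apply, smul_eq_mul,
      decide_eq_true_eq] at h1
    have hsum : (∑ i : Fin n, if i ∈ T then (1 : ZMod p) else 0) = (T.card : ZMod p) := by
      rw [Finset.sum_ite_mem, Finset.univ_inter, Finset.sum_const, nsmul_eq_mul, mul_one]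
    calc ((T.card : ZMod p) - (k : ZMod p)) *
          (∑ j : {A : Finset (Fin n) // A.card < s}, if j.1 ⊆ T then g j else 0)
        = ∑ j : {A : Finset (Fin n) // A.card < s},
            g j * ((∏ x ∈ j.1, if x ∈ T then (1 : ZMod p) else 0) *
              ((∑ x : Fin n, if x ∈ T then (1 : ZMod p) else 0) - (k : ZMod p))) := by
          rw [Finset.mul_sum]
          apply Finset.sum_congr rfl
          intro j _
          rw [swallow_prod_ite_subset, hsum]
          split <;> ring
      _ = 0 := h1
  -- Pick A₀ of minimal cardinality in the support of g
  obtain ⟨A₀, hA₀mem, hA₀min⟩ := Finset.exists_min_image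
    (Finset.univ.filter fun j => g j ≠ 0) (fun j => j.1.card)
    ⟨i₀, Finset.mem_filter.mpr ⟨Finset.mem_univ _, hi₀⟩⟩
  have hgA₀ : g A₀ ≠ 0 := (Finset.mem_filter.mp hA₀mem).2
  have hmin : ∀ j, g j ≠ 0 → A₀.1.card ≤ j.1.card := fun j hj =>
    hA₀min j (Finset.mem_filter.mpr ⟨Finset.mem_univ _, hj⟩)
  -- Λ(A₀) = g A₀
  have hΛA₀ : (∑ j : {A : Finset (Fin n) // A.card < s},
      if j.1 ⊆ A₀.1 then g j else 0) = g A₀ := by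
    rw [Finset.sum_eq_single A₀]
    · rw [if_pos (subset_refl _)]
    · intro j _ hjne
      by_cases hsub : j.1 ⊆ A₀.1
      · rw [if_pos hsub]
        by_contra hgj
        have hcard := hmin j hgj
        exact hjne (Subtype.ext (Finset.eq_of_subset_of_card_le hsub hcard))
      · rw [if_neg hsub]
    · intro h; exact absurd (Finset.mem_univ A₀) h
  -- |A₀| = k
  have hA₀k : A₀.1.card = k := by
    have h0 := hgx A₀.1
    rw [hΛA₀, mul_eq_zero] at h0
    rcases h0 with h0 | h0
    · have hcast : ((A₀.1.card : ℕ) : ZMod p) = ((k : ℕ) : ZMod p) := sub_eq_zero.mp h0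
      have := congrArg ZMod.val hcast
      rwa [ZMod.val_cast_of_lt (lt_trans A₀.2 hsp), ZMod.val_cast_of_lt hkp] at this
    · exact absurd h0 hgA₀
  -- Choose S₀ disjoint from A₀ of size s
  have hscard : s ≤ A₀.1ᶜ.card := by
    rw [Finset.card_compl, Fintype.card_fin, hA₀k]
    omega
  obtain ⟨S₀, hS₀sub, hS₀card⟩ := Finset.exists_subset_card_eq hscard
  have hdisj : Disjoint A₀.1 S₀ := by
    rw [Finset.disjoint_right]
    intro a ha
    exact Finset.mem_compl.mp (hS₀sub ha)
  -- Λ(A₀ ∪ U) = 0 for nonempty U ⊆ S₀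
  have hPU : ∀ U, U ⊆ S₀ → U ≠ ∅ →
      (∑ j : {A : Finset (Fin n) // A.card < s},
        if j.1 ⊆ A₀.1 ∪ U then g j else 0) = 0 := by
    intro U hU hUne
    have h0 := hgx (A₀.1 ∪ U)
    have hcardU : (A₀.1 ∪ U).card = k + U.card := by
      rw [Finset.card_union_of_disjoint (hdisj.mono_right hU), hA₀k]
    rw [hcardU] at h0
    have hc : ((k + U.card : ℕ) : ZMod p) - (k : ZMod p) = (U.card : ZMod p) := by
      push_cast; ring
    rw [hc] at h0
    rcases mul_eq_zero.mp h0 with h0 | h0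
    · exfalso
      have hdvd := (ZMod.natCast_eq_zero_iff _ _).mp h0
      have h1 : 0 < U.card := Finset.card_pos.mpr (Finset.nonempty_of_ne_empty hUne)
      have h2 : U.card ≤ s := hS₀card ▸ Finset.card_le_card hU
      have := Nat.le_of_dvd h1 hdvd
      omega
    · exact h0
  -- The alternating sum over subsets of S₀, computed two ways
  have hE1 : (∑ U ∈ S₀.powerset, (-1 : ZMod p) ^ U.card *
      (∑ j : {A : Finset (Fin n) // A.card < s},
        if j.1 ⊆ A₀.1 ∪ U then g j else 0)) = g A₀ := by
    rw [Finset.sum_eq_single ∅]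
    · simp only [Finset.card_empty, pow_zero, one_mul, Finset.union_empty]
      exact hΛA₀
    · intro U hUmem hUne
      rw [hPU U (Finset.mem_powerset.mp hUmem) hUne, mul_zero]
    · intro h; exact absurd (Finset.empty_mem_powerset _) h
  have hE2 : (∑ U ∈ S₀.powerset, (-1 : ZMod p) ^ U.card *
      (∑ j : {A : Finset (Fin n) // A.card < s},
        if j.1 ⊆ A₀.1 ∪ U then g j else 0)) = 0 := by
    have hswap : (∑ U ∈ S₀.powerset, (-1 : ZMod p) ^ U.card *
        (∑ j : {A : Finset (Fin n) // A.card < s},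
          if j.1 ⊆ A₀.1 ∪ U then g j else 0))
        = ∑ j : {A : Finset (Fin n) // A.card < s},
            ∑ U ∈ S₀.powerset, (-1 : ZMod p) ^ U.card *
              (if j.1 ⊆ A₀.1 ∪ U then g j else 0) := by
      rw [← Finset.sum_comm]
      apply Finset.sum_congr rfl
      intro U _
      rw [Finset.mul_sum]
    rw [hswap]
    apply Finset.sum_eq_zero
    intro j _
    have hiff : ∀ U : Finset (Fin n), (j.1 ⊆ A₀.1 ∪ U) ↔ (j.1 \ A₀.1 ⊆ U) := by
      intro U
      constructor
      · intro h a ha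
        rcases Finset.mem_union.mp (h (Finset.mem_sdiff.mp ha).1) with h' | h'
        · exact absurd h' (Finset.mem_sdiff.mp ha).2
        · exact h'
      · intro h a ha
        by_cases haA : a ∈ A₀.1
        · exact Finset.mem_union_left _ haA
        · exact Finset.mem_union_right _ (h (Finset.mem_sdiff.mpr ⟨ha, haA⟩))
    calc ∑ U ∈ S₀.powerset, (-1 : ZMod p) ^ U.card *
          (if j.1 ⊆ A₀.1 ∪ U then g j else 0)
        = ∑ U ∈ S₀.powerset,
            (if j.1 \ A₀.1 ⊆ U then (-1 : ZMod p) ^ U.card * g j else 0) := by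
          apply Finset.sum_congr rfl
          intro U _
          simp only [hiff]
          split <;> simp
      _ = ∑ U ∈ S₀.powerset.filter (fun U => j.1 \ A₀.1 ⊆ U),
            (-1 : ZMod p) ^ U.card * g j := (Finset.sum_filter _ _).symm
      _ = (∑ U ∈ S₀.powerset.filter (fun U => j.1 \ A₀.1 ⊆ U),
            (-1 : ZMod p) ^ U.card) * g j := by rw [Finset.sum_mul]
      _ = 0 := by
          by_cases hVS : j.1 \ A₀.1 ⊆ S₀
          · have hVne : j.1 \ A₀.1 ≠ S₀ := by
              intro h
              have h1 : (j.1 \ A₀.1).card ≤ j.1.card :=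
                Finset.card_le_card (Finset.sdiff_subset)
              have h2 : j.1.card < s := j.2
              rw [h, hS₀card] at h1
              omega
            rw [swallow_alt_sum_zero S₀ (j.1 \ A₀.1) hVS hVne, zero_mul]
          · have : S₀.powerset.filter (fun U => j.1 \ A₀.1 ⊆ U) = ∅ := by
              apply Finset.filter_false_of_mem
              intro U hU h
              exact hVS (h.trans (Finset.mem_powerset.mp hU))
            rw [this, Finset.sum_empty, zero_mul]
  exact hgA₀ (hE1.symm.trans hE2)
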